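/- Let U (users), R (reviews), B (businesses), A (aspects) be finite types, and let wUR : U → R → Prop, wRB : R → B → Prop, wRA : R → A → Prop, wUB : U → B → Prop be decidable relations with indicator matrices W_UR ∈ Matrix U R ℕ, W_RB ∈ Matrix R B ℕ, W_RA ∈ Matrix R A ℕ, W_UB ∈ Matrix U B ℕ. Then for all i : U and j : B, (W_UR * ((W_RB * W_RBᵀ) ⊙ (W_RA * W_RAᵀ)) * W_URᵀ * W_UB) i j = the cardinality of the finite set {(r, r', b, a, u) : R × R × B × A × U | wUR i r ∧ wRB r b ∧ wRA r a ∧ wRB r' b ∧ wRA r' a ∧ wUR u r' ∧ wUB u j}. -/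
import Mathlib


open Matrix

/-- Correctness of Algorithm 1: the metagraph similarity matrix
`C_{M₉} = W_UR ((W_RB W_RBᵀ) ⊙ (W_RA W_RAᵀ)) W_URᵀ W_UB` counts, in entry `(i, j)`,
the number of instances `(r, r', b, a, u)` of metagraph `M₉` connecting user `i`
to business `j`: a review `r` written by `i` and a review `r'` written by some
user `u` who rated business `j`, such that `r` and `r'` rate a common business `b`
and mention a common aspect `a`. -/
theorem metagraph_M9_similarity_counts_instances
    {U R B A : Type*} [Fintype U] [Fintype R] [Fintype B] [Fintype A]
    (wUR : U → R → Prop) (wRB : R → B → Prop) (wRA : R → A → Prop)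
    (wUB : U → B → Prop)
    [∀ u r, Decidable (wUR u r)] [∀ r b, Decidable (wRB r b)]
    [∀ r a, Decidable (wRA r a)] [∀ u b, Decidable (wUB u b)]
    (WUR : Matrix U R ℕ) (WRB : Matrix R B ℕ) (WRA : Matrix R A ℕ)
    (WUB : Matrix U B ℕ)
    (hWUR : ∀ u r, WUR u r = if wUR u r then 1 else 0)
    (hWRB : ∀ r b, WRB r b = if wRB r b then 1 else 0)
    (hWRA : ∀ r a, WRA r a = if wRA r a then 1 else 0)
    (hWUB : ∀ u b, WUB u b = if wUB u b then 1 else 0)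
    (i : U) (j : B) :
    (WUR * Matrix.hadamard (WRB * WRBᵀ) (WRA * WRAᵀ) * WURᵀ * WUB) i j
      = (Finset.filter
          (fun q : R × R × B × A × U =>
            wUR i q.1 ∧ wRB q.1 q.2.2.1 ∧ wRA q.1 q.2.2.2.1
              ∧ wRB q.2.1 q.2.2.1 ∧ wRA q.2.1 q.2.2.2.1
              ∧ wUR q.2.2.2.2 q.2.1 ∧ wUB q.2.2.2.2 j)
          Finset.univ).card := by
  rw [Finset.card_filter]
  simp only [Matrix.mul_apply, Matrix.hadamard_apply, Matrix.transpose_apply, hWUR, hWRB, hWRA,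
    hWUB, Finset.sum_mul, Finset.mul_sum, ite_zero_mul_ite_zero, mul_one, Fintype.sum_prod_type]
  rw [Finset.sum_comm]
  conv_lhs => enter [2, r']; rw [Finset.sum_comm]
  rw [Finset.sum_comm]
  conv_lhs => enter [2, r, 2, r']; rw [Finset.sum_comm]
  conv_lhs => enter [2, r, 2, r', 2, a]; rw [Finset.sum_comm]
  conv_lhs => enter [2, r, 2, r']; rw [Finset.sum_comm]
  refine Finset.sum_congr rfl fun r _ => Finset.sum_congr rfl fun r' _ =>
    Finset.sum_congr rfl fun b _ => Finset.sum_congr rfl fun a _ =>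
    Finset.sum_congr rfl fun u _ => if_congr (by tauto) rfl rfl
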